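/- Let N = U ⊕ U(2) ⊕ E8(2), where U is the hyperbolic plane with standard basis e, f. If e', f' ∈ N satisfy (e'·e') = (f'·f') = 0 and (e'·f') = 1 (i.e. they are standard generators of an embedded copy of U), then e' + f' ≡ e + f modulo the subgroup 2U ⊕ U(2) ⊕ E8(2). Concretely: writing e' = ae + bf + u and f' = ce + df + w with a,b,c,d ∈ ℤ and u, w ∈ U(2) ⊕ E8(2), either a,d are odd and b,c even, or a,d are even and b,c odd. -/
import Mathlib


/-!
We model the lattice `N = U ⊕ U(2) ⊕ E8(2)` as `ℤ¹²` with an explicit Gram matrix: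
coordinates 0,1 span the hyperbolic plane `U` (basis `e, f`), coordinates 2,3 span
`U(2)` (basis `h, k`), and coordinates 4,…,11 span `E8(2)` (the negative definite
even unimodular `E8` lattice with its form doubled; the E8 Dynkin diagram used is
the chain 4-5-6-7-8-9-10 with the extra node 11 attached to node 6).
-/

open Matrix

/-- Gram matrix of `N = U ⊕ U(2) ⊕ E8(2)`. -/
def NGram : Matrix (Fin 12) (Fin 12) ℤ :=
  !![0,1,0,0, 0,0,0,0,0,0,0,0;
     1,0,0,0, 0,0,0,0,0,0,0,0;
     0,0,0,2, 0,0,0,0,0,0,0,0;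
     0,0,2,0, 0,0,0,0,0,0,0,0;
     0,0,0,0, -4,2,0,0,0,0,0,0;
     0,0,0,0, 2,-4,2,0,0,0,0,0;
     0,0,0,0, 0,2,-4,2,0,0,0,2;
     0,0,0,0, 0,0,2,-4,2,0,0,0;
     0,0,0,0, 0,0,0,2,-4,2,0,0;
     0,0,0,0, 0,0,0,0,2,-4,2,0;
     0,0,0,0, 0,0,0,0,0,2,-4,0;
     0,0,0,0, 0,0,2,0,0,0,0,-4]

/-- The symmetric bilinear form of the lattice `N`. -/
def Nform (x y : Fin 12 → ℤ) : ℤ := x ⬝ᵥ NGram.mulVec y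

/-- The standard hyperbolic vector `e` of the `U` summand of `N`. -/
def eN : Fin 12 → ℤ := Pi.single 0 1

/-- The standard hyperbolic vector `f` of the `U` summand of `N`. -/
def fN : Fin 12 → ℤ := Pi.single 1 1

/-- The character `ε : N → ℤ/2`, `ε(x) = (x·(e+f)) mod 2`. -/
def epsN (x : Fin 12 → ℤ) : ZMod 2 := ((Nform x (eN + fN) : ℤ) : ZMod 2)

/-- If `e', f' ∈ N` satisfy `(e'·e') = (f'·f') = 0` and `(e'·f') = 1`
(standard generators of an embedded copy of `U`), then `e' + f' ≡ e + f` modulo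
`2U ⊕ U(2) ⊕ E8(2)`.  Concretely, writing `e' = a·e + b·f + u`, `f' = c·e + d·f + w`
(so `a = e' 0`, `b = e' 1`, `c = f' 0`, `d = f' 1`), either `a, d` are odd and `b, c`
are even, or `a, d` are even and `b, c` are odd. -/

lemma Nform_expand (x y : Fin 12 → ℤ) :
    Nform x y = x 0 * y 1 + x 1 * y 0 + 2 * (x 2 * y 3 + x 3 * y 2)
      + (x 4 * (-4 * y 4 + 2 * y 5) + x 5 * (2 * y 4 - 4 * y 5 + 2 * y 6)
       + x 6 * (2 * y 5 - 4 * y 6 + 2 * y 7 + 2 * y 11)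
       + x 7 * (2 * y 6 - 4 * y 7 + 2 * y 8)
       + x 8 * (2 * y 7 - 4 * y 8 + 2 * y 9)
       + x 9 * (2 * y 8 - 4 * y 9 + 2 * y 10)
       + x 10 * (2 * y 9 - 4 * y 10)
       + x 11 * (2 * y 6 - 4 * y 11)) := by
  have s3 : (Fin.succ 2 : Fin 12) = 3 := rfl
  have s4 : ((Fin.succ 2).succ : Fin 12) = 4 := rfl
  have s5 : ((Fin.succ 2).succ.succ : Fin 12) = 5 := rfl
  have s6 : ((Fin.succ 2).succ.succ.succ : Fin 12) = 6 := rfl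
  have s7 : ((Fin.succ 2).succ.succ.succ.succ : Fin 12) = 7 := rfl
  have s8 : ((Fin.succ 2).succ.succ.succ.succ.succ : Fin 12) = 8 := rfl
  have s9 : ((Fin.succ 2).succ.succ.succ.succ.succ.succ : Fin 12) = 9 := rfl
  have s10 : ((Fin.succ 2).succ.succ.succ.succ.succ.succ.succ : Fin 12) = 10 := rfl
  have s11 : ((Fin.succ 2).succ.succ.succ.succ.succ.succ.succ.succ : Fin 12) = 11 := rfl
  simp [Nform, NGram, mulVec, dotProduct, Fin.sum_univ_succ, s3, s4, s5, s6, s7, s8,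
    s9, s10, s11]
  ring

lemma Nform_self (x : Fin 12 → ℤ) :
    ∃ K, Nform x x = 2 * (x 0 * x 1) + 4 * K := by
  refine ⟨x 2 * x 3 - x 4 ^ 2 - x 5 ^ 2 - x 6 ^ 2 - x 7 ^ 2 - x 8 ^ 2 - x 9 ^ 2
    - x 10 ^ 2 - x 11 ^ 2 + x 4 * x 5 + x 5 * x 6 + x 6 * x 7 + x 7 * x 8
    + x 8 * x 9 + x 9 * x 10 + x 6 * x 11, ?_⟩
  rw [Nform_expand]; ring

lemma Nform_cross (x y : Fin 12 → ℤ) :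
    ∃ L, Nform x y = x 0 * y 1 + x 1 * y 0 + 2 * L := by
  refine ⟨x 2 * y 3 + x 3 * y 2
      + (x 4 * (-2 * y 4 + y 5) + x 5 * (y 4 - 2 * y 5 + y 6)
       + x 6 * (y 5 - 2 * y 6 + y 7 + y 11)
       + x 7 * (y 6 - 2 * y 7 + y 8)
       + x 8 * (y 7 - 2 * y 8 + y 9)
       + x 9 * (y 8 - 2 * y 9 + y 10)
       + x 10 * (y 9 - 2 * y 10)
       + x 11 * (y 6 - 2 * y 11)), ?_⟩
  rw [Nform_expand]; ring

lemma two_mul_cast (k : ℤ) : ((2 * k : ℤ) : ZMod 2) = 0 :=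
  (ZMod.intCast_zmod_eq_zero_iff_dvd _ 2).2 ⟨k, by norm_num⟩

lemma even_iff_cast (n : ℤ) : Even n ↔ (n : ZMod 2) = 0 := by
  rw [ZMod.intCast_zmod_eq_zero_iff_dvd]
  constructor
  · rintro ⟨k, hk⟩; exact ⟨k, by omega⟩
  · rintro ⟨k, hk⟩; exact ⟨k, by omega⟩

lemma odd_iff_cast (n : ℤ) : Odd n ↔ (n : ZMod 2) = 1 := by
  rw [← Int.not_even_iff_odd, even_iff_cast]
  generalize (n : ZMod 2) = m
  revert m; decide

theorem stmt_0 (e' f' : Fin 12 → ℤ)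
    (h1 : Nform e' e' = 0) (h2 : Nform f' f' = 0) (h3 : Nform e' f' = 1) :
    (Odd (e' 0) ∧ Odd (f' 1) ∧ Even (e' 1) ∧ Even (f' 0)) ∨
    (Even (e' 0) ∧ Even (f' 1) ∧ Odd (e' 1) ∧ Odd (f' 0)) := by
  obtain ⟨K1, hK1⟩ := Nform_self e'
  obtain ⟨K2, hK2⟩ := Nform_self f'
  obtain ⟨L, hL⟩ := Nform_cross e' f'
  rw [h1] at hK1; rw [h2] at hK2; rw [h3] at hL
  set a := e' 0; set b := e' 1; set c := f' 0; set d := f' 1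
  have hab : ((a * b : ℤ) : ZMod 2) = 0 := by
    have h : a * b = 2 * (-K1) := by linarith
    rw [h]; exact two_mul_cast _
  have hcd : ((c * d : ℤ) : ZMod 2) = 0 := by
    have h : c * d = 2 * (-K2) := by linarith
    rw [h]; exact two_mul_cast _
  have hadbc : ((a * d + b * c : ℤ) : ZMod 2) = 1 := by
    have h : a * d + b * c = 1 - 2 * L := by linarith
    rw [h, Int.cast_sub, two_mul_cast]; simp
  push_cast at hab hcd hadbc
  have key : ∀ A B C D : ZMod 2, A * B = 0 → C * D = 0 → A * D + B * C = 1 →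
      (A = 1 ∧ D = 1 ∧ B = 0 ∧ C = 0) ∨ (A = 0 ∧ D = 0 ∧ B = 1 ∧ C = 1) := by decide
  rcases key a b c d hab hcd hadbc with ⟨hA, hD, hB, hC⟩ | ⟨hA, hD, hB, hC⟩
  · exact Or.inl ⟨(odd_iff_cast a).2 hA, (odd_iff_cast d).2 hD,
      (even_iff_cast b).2 hB, (even_iff_cast c).2 hC⟩
  · exact Or.inr ⟨(even_iff_cast a).2 hA, (even_iff_cast d).2 hD,
      (odd_iff_cast b).2 hB, (odd_iff_cast c).2 hC⟩
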